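/- Let T be an ℕ^k-action by open maps on X with a dense orbit, Σ = ⋃{Σ_U : U open nonempty}, and H(T) = {m − n : (m,n) ∈ Σ} ⊆ ℤ^k. Then Σ = {(m,n) ∈ ℕ^k × ℕ^k : m − n ∈ H(T)}. -/

import Mathlib

/-- If `T` is an `ℕ^k`-action by continuous open maps on `X` with a dense orbit,
`Σ = ⋃ {Σ_U : U open nonempty}` and `H(T) = {m − n : (m,n) ∈ Σ} ⊆ ℤ^k`, then
`Σ = {(m,n) ∈ ℕ^k × ℕ^k : m − n ∈ H(T)}`. -/
theorem Sigma_eq_diff_in_H {k : ℕ} {X : Type*} [TopologicalSpace X]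
    (T : (Fin k → ℕ) → X → X) (hT0 : T 0 = id)
    (hTadd : ∀ m n, T (m + n) = T m ∘ T n)
    (hcont : ∀ m, Continuous (T m)) (hopen : ∀ m, IsOpenMap (T m))
    (hdense : ∃ x : X, Dense {y : X | ∃ m n : Fin k → ℕ, T m x = T n y}) :
    ∀ m n : Fin k → ℕ,
      (∃ U : Set X, IsOpen U ∧ U.Nonempty ∧ ∀ x ∈ U, T m x = T n x) ↔
      (fun i => (m i : ℤ) - n i) ∈
        {g : Fin k → ℤ | ∃ p q : Fin k → ℕ,
          (∃ U : Set X, IsOpen U ∧ U.Nonempty ∧ ∀ x ∈ U, T p x = T q x) ∧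
          (fun i => (p i : ℤ) - q i) = g} := by
  intro m n
  constructor
  · intro h
    exact ⟨m, n, h, rfl⟩
  · rintro ⟨p, q, ⟨U, hUopen, hUne, hUeq⟩, hpq⟩
    have hmq : m + q = n + p := by
      funext i
      have := congrFun hpq i
      have : (p i : ℤ) - q i = (m i : ℤ) - n i := this
      simp only [Pi.add_apply]
      omega
    refine ⟨T q '' U, hopen q U hUopen, hUne.image _, ?_⟩
    rintro _ ⟨w, hw, rfl⟩
    have h1 : T m (T q w) = T (m + q) w := (congrFun (hTadd m q) w).symm
    have h2 : T n (T q w) = T (n + q) w := (congrFun (hTadd n q) w).symm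
    rw [h1, h2, hmq]
    calc T (n + p) w = T n (T p w) := congrFun (hTadd n p) w
      _ = T n (T q w) := by rw [hUeq w hw]
      _ = T (n + q) w := (congrFun (hTadd n q) w).symm
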